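/- Under the setup of Algorithm 1 with γ > 0 and η > 0, the sequence of orthogonal iterates satisfies Σ_{t=1}^∞ Σ_{i=1}^M ‖R_i^{(t)} − R_i^{(t−1)}‖_F² < ∞; in particular R_i^{(t)} − R_i^{(t−1)} → 0 for every i as t → ∞. -/
import Mathlib


open Matrix Filter
open scoped BigOperators

noncomputable section

def sqnorm {d : ℕ} (v : Fin d → ℝ) : ℝ := ∑ k, v k ^ 2

def frobSq {d : ℕ} (A : Matrix (Fin d) (Fin d) ℝ) : ℝ := ∑ a, ∑ b, (A a b) ^ 2

def wCoef {M d : ℕ} (γ : ℝ) (μ : Fin M → (Fin d → ℝ)) (i j : Fin M) : ℝ :=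
  Real.exp (-γ * (sqnorm (μ i) + sqnorm (μ j)))

def kCoef {M d : ℕ} (γ : ℝ) (μ : Fin M → (Fin d → ℝ))
    (R : Fin M → Matrix (Fin d) (Fin d) ℝ) (i j : Fin M) : ℝ :=
  Real.exp (2 * γ * (((R i).mulVec (μ i)) ⬝ᵥ ((R j).mulVec (μ j))))

def Hmat {M d : ℕ} (γ η : ℝ) (μ : Fin M → (Fin d → ℝ))
    (R : Fin M → Matrix (Fin d) (Fin d) ℝ) (i : Fin M) :
    Matrix (Fin d) (Fin d) ℝ :=
  (∑ j, (wCoef γ μ i j * kCoef γ μ R i j) •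
      Matrix.vecMulVec ((R j).mulVec (μ j)) (μ i)) + η • R i

end

noncomputable section AuxAlg1

/-- the image vector `R_i μ_i`. -/
def aVec {M d : ℕ} (μ : Fin M → (Fin d → ℝ)) (R : Fin M → Matrix (Fin d) (Fin d) ℝ)
    (i : Fin M) : Fin d → ℝ := (R i).mulVec (μ i)

lemma kCoef_eq {M d : ℕ} (γ : ℝ) (μ : Fin M → (Fin d → ℝ))
    (R : Fin M → Matrix (Fin d) (Fin d) ℝ) (i j : Fin M) :
    kCoef γ μ R i j = Real.exp (2 * γ * (aVec μ R i ⬝ᵥ aVec μ R j)) := rfl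

lemma frobSq_nonneg {d : ℕ} (A : Matrix (Fin d) (Fin d) ℝ) : 0 ≤ frobSq A :=
  Finset.sum_nonneg fun _ _ => Finset.sum_nonneg fun _ _ => sq_nonneg _

lemma trace_tmul_vecMulVec {d : ℕ} (X : Matrix (Fin d) (Fin d) ℝ) (u v : Fin d → ℝ) :
    Matrix.trace (Xᵀ * Matrix.vecMulVec u v) = (X.mulVec v) ⬝ᵥ u := by
  simp only [Matrix.trace, Matrix.diag, Matrix.mul_apply, Matrix.vecMulVec_apply,
    Matrix.transpose_apply, Matrix.mulVec, dotProduct]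
  rw [Finset.sum_comm]
  exact Finset.sum_congr rfl fun a _ => by
    rw [Finset.sum_mul]; exact Finset.sum_congr rfl fun b _ => by ring

lemma vonNeumann_le {d : ℕ} (U V R : Matrix (Fin d) (Fin d) ℝ) (s : Fin d → ℝ)
    (hU : Uᵀ * U = 1) (hV : Vᵀ * V = 1) (hs : ∀ k, 0 ≤ s k) (hR : Rᵀ * R = 1) :
    Matrix.trace (Rᵀ * (U * Matrix.diagonal s * Vᵀ)) ≤ ∑ k, s k := by
  have hU' : U * Uᵀ = 1 := mul_eq_one_comm.mp hU
  have hR' : R * Rᵀ = 1 := mul_eq_one_comm.mp hR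
  set Q := Vᵀ * Rᵀ * U with hQ
  have hQQ : Q * Qᵀ = 1 := by
    rw [hQ]
    simp only [Matrix.transpose_mul, Matrix.transpose_transpose, Matrix.mul_assoc]
    rw [← Matrix.mul_assoc U Uᵀ, hU', Matrix.one_mul, ← Matrix.mul_assoc Rᵀ R, hR]
    simpa [Matrix.mul_assoc] using hV
  have htr : Matrix.trace (Rᵀ * (U * Matrix.diagonal s * Vᵀ))
      = Matrix.trace (Q * Matrix.diagonal s) := by
    rw [hQ, show Rᵀ * (U * Matrix.diagonal s * Vᵀ) = (Rᵀ * U * Matrix.diagonal s) * Vᵀ by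
      simp [Matrix.mul_assoc], Matrix.trace_mul_comm]
    simp [Matrix.mul_assoc]
  rw [htr]
  have hdiag : ∀ k, Q k k ≤ 1 := by
    intro k
    have h1 : ∑ j, Q k j * Q k j = 1 := by
      have := congrFun (congrFun hQQ k) k
      simpa [Matrix.mul_apply, Matrix.transpose_apply, Matrix.one_apply] using this
    have h2 : Q k k * Q k k ≤ 1 := by
      rw [← h1]
      exact Finset.single_le_sum (fun j _ => mul_self_nonneg (Q k j)) (Finset.mem_univ k)
    nlinarith
  calc Matrix.trace (Q * Matrix.diagonal s) = ∑ k, Q k k * s k := by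
        simp [Matrix.trace, Matrix.diag, Matrix.mul_diagonal]
    _ ≤ ∑ k, s k := Finset.sum_le_sum fun k _ => by
        have := hs k; nlinarith [hdiag k]

lemma trace_uv {d : ℕ} (U V : Matrix (Fin d) (Fin d) ℝ) (s : Fin d → ℝ)
    (hU : Uᵀ * U = 1) (hV : Vᵀ * V = 1) :
    Matrix.trace ((U * Vᵀ)ᵀ * (U * Matrix.diagonal s * Vᵀ)) = ∑ k, s k := by
  rw [Matrix.transpose_mul, Matrix.transpose_transpose]
  have h1 : V * Uᵀ * (U * Matrix.diagonal s * Vᵀ) = V * Matrix.diagonal s * Vᵀ := by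
    calc V * Uᵀ * (U * Matrix.diagonal s * Vᵀ)
        = V * ((Uᵀ * U) * (Matrix.diagonal s * Vᵀ)) := by simp [Matrix.mul_assoc]
      _ = V * Matrix.diagonal s * Vᵀ := by rw [hU, Matrix.one_mul, Matrix.mul_assoc]
  rw [h1, Matrix.trace_mul_comm (V * Matrix.diagonal s) Vᵀ, ← Matrix.mul_assoc, hV,
    Matrix.one_mul, Matrix.trace_diagonal]

lemma kernel_psd {M d : ℕ} (c : ℝ) (hc : 0 ≤ c) (a : Fin M → Fin d → ℝ) (β : Fin M → ℝ) :
    0 ≤ ∑ i, ∑ j, β i * β j * Real.exp (c * (a i ⬝ᵥ a j)) := by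
  have hexp : ∀ x : ℝ, Real.exp x = ∑' n : ℕ, x ^ n / (n.factorial : ℝ) := fun x => by
    rw [Real.exp_eq_exp_ℝ, NormedSpace.exp_eq_tsum_div]
  have hsumm : ∀ (b x : ℝ), Summable (fun n : ℕ => b * (x ^ n / (n.factorial : ℝ))) := fun b x =>
    (Real.summable_pow_div_factorial x).mul_left b
  have key : ∀ n : ℕ, ∑ i, ∑ j, β i * β j * ((c * (a i ⬝ᵥ a j)) ^ n / (n.factorial : ℝ))
      = (c ^ n / (n.factorial : ℝ)) * ∑ p : Fin n → Fin d, (∑ i, β i * ∏ m, a i (p m)) ^ 2 := by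
    intro n
    have hsij : ∀ i j : Fin M, (a i ⬝ᵥ a j) ^ n
        = ∑ p : Fin n → Fin d, (∏ m, a i (p m)) * (∏ m, a j (p m)) := by
      intro i j
      rw [dotProduct, Fintype.sum_pow]
      exact Finset.sum_congr rfl fun p _ => Finset.prod_mul_distrib
    have hterm : ∀ i j : Fin M, β i * β j * ((c * (a i ⬝ᵥ a j)) ^ n / (n.factorial : ℝ))
        = ∑ p : Fin n → Fin d,
            (c ^ n / (n.factorial : ℝ)) * ((β i * ∏ m, a i (p m)) * (β j * ∏ m, a j (p m))) := by
      intro i j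
      rw [mul_pow, hsij i j, Finset.mul_sum, Finset.sum_div, Finset.mul_sum]
      exact Finset.sum_congr rfl fun p _ => by ring
    simp_rw [hterm]
    calc ∑ i, ∑ j, ∑ p : Fin n → Fin d,
          (c ^ n / (n.factorial : ℝ)) * ((β i * ∏ m, a i (p m)) * (β j * ∏ m, a j (p m)))
        = ∑ i, ∑ p : Fin n → Fin d, ∑ j,
          (c ^ n / (n.factorial : ℝ)) * ((β i * ∏ m, a i (p m)) * (β j * ∏ m, a j (p m))) :=
          Finset.sum_congr rfl fun i _ => Finset.sum_comm
      _ = ∑ p : Fin n → Fin d, ∑ i, ∑ j,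
          (c ^ n / (n.factorial : ℝ)) * ((β i * ∏ m, a i (p m)) * (β j * ∏ m, a j (p m))) :=
          Finset.sum_comm
      _ = (c ^ n / (n.factorial : ℝ)) * ∑ p : Fin n → Fin d, (∑ i, β i * ∏ m, a i (p m)) ^ 2 := by
          rw [Finset.mul_sum]
          refine Finset.sum_congr rfl fun p _ => ?_
          rw [sq, Finset.sum_mul_sum, Finset.mul_sum]
          exact Finset.sum_congr rfl fun i _ => by rw [Finset.mul_sum]
  have heq : ∑ i, ∑ j, β i * β j * Real.exp (c * (a i ⬝ᵥ a j))
      = ∑' n : ℕ, (c ^ n / (n.factorial : ℝ)) *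
          ∑ p : Fin n → Fin d, (∑ i, β i * ∏ m, a i (p m)) ^ 2 := by
    have h1 : ∑ i, ∑ j, β i * β j * Real.exp (c * (a i ⬝ᵥ a j))
        = ∑ i, ∑ j, ∑' n : ℕ, β i * β j * ((c * (a i ⬝ᵥ a j)) ^ n / (n.factorial : ℝ)) := by
      refine Finset.sum_congr rfl fun i _ => Finset.sum_congr rfl fun j _ => ?_
      rw [hexp, ← tsum_mul_left]
    rw [h1]
    have h2 : ∀ i : Fin M, Summable
        (fun n : ℕ => ∑ j, β i * β j * ((c * (a i ⬝ᵥ a j)) ^ n / (n.factorial : ℝ))) :=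
      fun i => summable_sum fun j _ => hsumm _ _
    rw [show (∑ i, ∑ j, ∑' n : ℕ, β i * β j * ((c * (a i ⬝ᵥ a j)) ^ n / (n.factorial : ℝ)))
        = ∑ i, ∑' n : ℕ, ∑ j, β i * β j * ((c * (a i ⬝ᵥ a j)) ^ n / (n.factorial : ℝ)) from
      Finset.sum_congr rfl fun i _ => (Summable.tsum_finsetSum fun j _ => hsumm _ _).symm]
    rw [← Summable.tsum_finsetSum fun i _ => h2 i]
    exact tsum_congr key
  rw [heq]
  refine tsum_nonneg fun n => mul_nonneg (div_nonneg (pow_nonneg hc n) (by positivity)) ?_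
  exact Finset.sum_nonneg fun p _ => sq_nonneg _

lemma sqnorm_eq_dot {d : ℕ} (v : Fin d → ℝ) : sqnorm v = v ⬝ᵥ v := by
  simp [sqnorm, dotProduct, sq]

lemma sqnorm_mulVec {d : ℕ} {R : Matrix (Fin d) (Fin d) ℝ} (hR : Rᵀ * R = 1) (v : Fin d → ℝ) :
    (R.mulVec v) ⬝ᵥ (R.mulVec v) = sqnorm v := by
  rw [Matrix.dotProduct_mulVec, Matrix.vecMul_mulVec, hR, Matrix.vecMul_one, sqnorm_eq_dot]

lemma dot_le {d : ℕ} (u v : Fin d → ℝ) : 2 * (u ⬝ᵥ v) ≤ u ⬝ᵥ u + v ⬝ᵥ v := by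
  have h : ∀ k : Fin d, 2 * (u k * v k) ≤ u k * u k + v k * v k := fun k => by
    nlinarith [sq_nonneg (u k - v k)]
  simp only [dotProduct, Finset.mul_sum]
  rw [← Finset.sum_add_distrib]
  exact Finset.sum_le_sum fun k _ => h k

lemma frobSq_eq_trace {d : ℕ} (A : Matrix (Fin d) (Fin d) ℝ) :
    frobSq A = Matrix.trace (Aᵀ * A) := by
  simp only [frobSq, Matrix.trace, Matrix.diag, Matrix.mul_apply, Matrix.transpose_apply]
  rw [Finset.sum_comm]
  exact Finset.sum_congr rfl fun a _ => Finset.sum_congr rfl fun b _ => by rw [sq]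

lemma trace_tmul_comm {d : ℕ} (A B : Matrix (Fin d) (Fin d) ℝ) :
    Matrix.trace (Aᵀ * B) = Matrix.trace (Bᵀ * A) := by
  rw [← Matrix.trace_transpose (Aᵀ * B), Matrix.transpose_mul, Matrix.transpose_transpose]

lemma frobSq_sub_eq {d : ℕ} {P Q : Matrix (Fin d) (Fin d) ℝ}
    (hP : Pᵀ * P = 1) (hQ : Qᵀ * Q = 1) :
    frobSq (P - Q) = -2 * Matrix.trace ((P - Q)ᵀ * Q) := by
  rw [frobSq_eq_trace]
  rw [Matrix.transpose_sub, Matrix.sub_mul, Matrix.sub_mul, Matrix.mul_sub, Matrix.mul_sub]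
  rw [Matrix.trace_sub, Matrix.trace_sub, Matrix.trace_sub, Matrix.trace_sub, hP, hQ]
  have h := trace_tmul_comm Q P
  linarith [h]

lemma trace_tmul_Hmat {M d : ℕ} (γ η : ℝ) (μ : Fin M → (Fin d → ℝ))
    (R : Fin M → Matrix (Fin d) (Fin d) ℝ) (i : Fin M) (X : Matrix (Fin d) (Fin d) ℝ) :
    Matrix.trace (Xᵀ * Hmat γ η μ R i)
      = (∑ j, (wCoef γ μ i j * kCoef γ μ R i j) * ((X.mulVec (μ i)) ⬝ᵥ aVec μ R j))
        + η * Matrix.trace (Xᵀ * R i) := by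
  unfold Hmat
  rw [Matrix.mul_add, Matrix.trace_add, Matrix.mul_smul, Matrix.trace_smul, smul_eq_mul]
  congr 1
  rw [Matrix.mul_sum, Matrix.trace_sum]
  refine Finset.sum_congr rfl fun j _ => ?_
  rw [Matrix.mul_smul, Matrix.trace_smul, smul_eq_mul, trace_tmul_vecMulVec]
  rfl

lemma expStep {w γ s s' : ℝ} (hw : 0 ≤ w) :
    w * Real.exp (2 * γ * s) * (1 + 2 * γ * (s' - s)) ≤ w * Real.exp (2 * γ * s') := by
  calc w * Real.exp (2 * γ * s) * (1 + 2 * γ * (s' - s))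
      ≤ w * Real.exp (2 * γ * s) * Real.exp (2 * γ * (s' - s)) :=
        mul_le_mul_of_nonneg_left (by linarith [Real.add_one_le_exp (2 * γ * (s' - s))])
          (mul_nonneg hw (Real.exp_pos _).le)
    _ = w * Real.exp (2 * γ * s') := by
        rw [mul_assoc, ← Real.exp_add, show 2 * γ * s + 2 * γ * (s' - s) = 2 * γ * s' by ring]

end AuxAlg1

section Ascent

lemma wk_nonneg {M d : ℕ} (γ : ℝ) (μ : Fin M → (Fin d → ℝ))
    (R : Fin M → Matrix (Fin d) (Fin d) ℝ) (i j : Fin M) :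
    0 ≤ wCoef γ μ i j * kCoef γ μ R i j :=
  mul_nonneg (Real.exp_pos _).le (Real.exp_pos _).le

lemma wk_symm {M d : ℕ} (γ : ℝ) (μ : Fin M → (Fin d → ℝ))
    (R : Fin M → Matrix (Fin d) (Fin d) ℝ) (i j : Fin M) :
    wCoef γ μ i j * kCoef γ μ R i j = wCoef γ μ j i * kCoef γ μ R j i := by
  unfold wCoef kCoef
  rw [add_comm (sqnorm (μ i)), dotProduct_comm]

lemma wCoef_split {M d : ℕ} (γ : ℝ) (μ : Fin M → (Fin d → ℝ)) (i j : Fin M) :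
    wCoef γ μ i j = Real.exp (-γ * sqnorm (μ i)) * Real.exp (-γ * sqnorm (μ j)) := by
  rw [wCoef, ← Real.exp_add]
  congr 1; ring

lemma ascent {M d : ℕ} (γ η : ℝ) (hγ : 0 < γ) (hη : 0 < η) (μ : Fin M → (Fin d → ℝ))
    (R R' : Fin M → Matrix (Fin d) (Fin d) ℝ)
    (hR : ∀ i, (R i)ᵀ * R i = 1) (hR' : ∀ i, (R' i)ᵀ * R' i = 1)
    (hopt : ∀ i, ∃ (U V : Matrix (Fin d) (Fin d) ℝ) (s : Fin d → ℝ),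
      Uᵀ * U = 1 ∧ Vᵀ * V = 1 ∧ (∀ k, 0 ≤ s k) ∧
      Hmat γ η μ R i = U * Matrix.diagonal s * Vᵀ ∧ R' i = U * Vᵀ) :
    (∑ i, ∑ j, wCoef γ μ i j * kCoef γ μ R i j) + 2 * γ * η * ∑ i, frobSq (R' i - R i)
      ≤ ∑ i, ∑ j, wCoef γ μ i j * kCoef γ μ R' i j := by
  -- Step D : per-row bound on the linear term
  have hT1 : ∀ i, η / 2 * frobSq (R' i - R i)
      ≤ ∑ j, (wCoef γ μ i j * kCoef γ μ R i j) * ((aVec μ R' i - aVec μ R i) ⬝ᵥ aVec μ R j) := by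
    intro i
    obtain ⟨U, V, s, hU, hV, hs, hH, hUV⟩ := hopt i
    have hmv : (R' i - R i).mulVec (μ i) = aVec μ R' i - aVec μ R i :=
      Matrix.sub_mulVec _ _ _
    have h1 : ∑ j, (wCoef γ μ i j * kCoef γ μ R i j) * ((aVec μ R' i - aVec μ R i) ⬝ᵥ aVec μ R j)
        = Matrix.trace ((R' i - R i)ᵀ * Hmat γ η μ R i)
          - η * Matrix.trace ((R' i - R i)ᵀ * R i) := by
      rw [trace_tmul_Hmat, hmv]; ring
    have h2 : 0 ≤ Matrix.trace ((R' i - R i)ᵀ * Hmat γ η μ R i) := by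
      rw [Matrix.transpose_sub, Matrix.sub_mul, Matrix.trace_sub, hH, hUV]
      have hle := vonNeumann_le U V (R i) s hU hV hs (hR i)
      have heq := trace_uv U V s hU hV
      linarith
    have h3 : frobSq (R' i - R i) = -2 * Matrix.trace ((R' i - R i)ᵀ * R i) :=
      frobSq_sub_eq (hR' i) (hR i)
    rw [h1, h3, show η / 2 * (-2 * Matrix.trace ((R' i - R i)ᵀ * R i))
      = -(η * Matrix.trace ((R' i - R i)ᵀ * R i)) from by ring]
    linarith
  -- Step C : the quadratic term is nonnegative (Gaussian kernel is PSD)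
  have hT2 : 0 ≤ ∑ i, ∑ j, (wCoef γ μ i j * kCoef γ μ R i j) *
      ((aVec μ R' i - aVec μ R i) ⬝ᵥ (aVec μ R' j - aVec μ R j)) := by
    have heq : ∑ i, ∑ j, (wCoef γ μ i j * kCoef γ μ R i j) *
        ((aVec μ R' i - aVec μ R i) ⬝ᵥ (aVec μ R' j - aVec μ R j))
        = ∑ k, ∑ i, ∑ j,
          (Real.exp (-γ * sqnorm (μ i)) * (aVec μ R' i - aVec μ R i) k) *
          (Real.exp (-γ * sqnorm (μ j)) * (aVec μ R' j - aVec μ R j) k) *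
          Real.exp (2 * γ * (aVec μ R i ⬝ᵥ aVec μ R j)) := by
      calc ∑ i, ∑ j, (wCoef γ μ i j * kCoef γ μ R i j) *
            ((aVec μ R' i - aVec μ R i) ⬝ᵥ (aVec μ R' j - aVec μ R j))
          = ∑ i, ∑ j, ∑ k, (wCoef γ μ i j * kCoef γ μ R i j) *
            ((aVec μ R' i - aVec μ R i) k * (aVec μ R' j - aVec μ R j) k) := by
            refine Finset.sum_congr rfl fun i _ => Finset.sum_congr rfl fun j _ => ?_
            rw [dotProduct, Finset.mul_sum]
        _ = ∑ i, ∑ k, ∑ j, (wCoef γ μ i j * kCoef γ μ R i j) *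
            ((aVec μ R' i - aVec μ R i) k * (aVec μ R' j - aVec μ R j) k) :=
            Finset.sum_congr rfl fun i _ => Finset.sum_comm
        _ = ∑ k, ∑ i, ∑ j, (wCoef γ μ i j * kCoef γ μ R i j) *
            ((aVec μ R' i - aVec μ R i) k * (aVec μ R' j - aVec μ R j) k) := Finset.sum_comm
        _ = _ := by
            refine Finset.sum_congr rfl fun k _ => Finset.sum_congr rfl fun i _ =>
              Finset.sum_congr rfl fun j _ => ?_
            rw [wCoef_split, kCoef_eq]
            ring
    rw [heq]
    refine Finset.sum_nonneg fun k _ => ?_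
    exact kernel_psd (2 * γ) (by linarith) (aVec μ R)
      (fun i => Real.exp (-γ * sqnorm (μ i)) * (aVec μ R' i - aVec μ R i) k)
  -- symmetry of the two linear terms
  have hsymsum : ∑ i, ∑ j, (wCoef γ μ i j * kCoef γ μ R i j) *
        (aVec μ R i ⬝ᵥ (aVec μ R' j - aVec μ R j))
      = ∑ i, ∑ j, (wCoef γ μ i j * kCoef γ μ R i j) *
        ((aVec μ R' i - aVec μ R i) ⬝ᵥ aVec μ R j) := by
    rw [Finset.sum_comm]
    refine Finset.sum_congr rfl fun i _ => Finset.sum_congr rfl fun j _ => ?_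
    rw [wk_symm γ μ R j i, dotProduct_comm]
  -- decomposition of the increment of the inner products
  have hdot : ∀ i j : Fin M,
      (wCoef γ μ i j * kCoef γ μ R i j) *
        (1 + 2 * γ * ((aVec μ R' i ⬝ᵥ aVec μ R' j) - (aVec μ R i ⬝ᵥ aVec μ R j)))
      = wCoef γ μ i j * kCoef γ μ R i j
        + 2 * γ * ((wCoef γ μ i j * kCoef γ μ R i j) * ((aVec μ R' i - aVec μ R i) ⬝ᵥ aVec μ R j))
        + 2 * γ * ((wCoef γ μ i j * kCoef γ μ R i j) * (aVec μ R i ⬝ᵥ (aVec μ R' j - aVec μ R j)))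
        + 2 * γ * ((wCoef γ μ i j * kCoef γ μ R i j) *
            ((aVec μ R' i - aVec μ R i) ⬝ᵥ (aVec μ R' j - aVec μ R j))) := by
    intro i j
    have hid : (aVec μ R' i ⬝ᵥ aVec μ R' j) - (aVec μ R i ⬝ᵥ aVec μ R j)
        = ((aVec μ R' i - aVec μ R i) ⬝ᵥ aVec μ R j)
          + (aVec μ R i ⬝ᵥ (aVec μ R' j - aVec μ R j))
          + ((aVec μ R' i - aVec μ R i) ⬝ᵥ (aVec μ R' j - aVec μ R j)) := by
      simp only [sub_dotProduct, dotProduct_sub]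
      ring
    rw [hid]; ring
  -- expansion of the linearized objective
  have hexpand : ∑ i, ∑ j, (wCoef γ μ i j * kCoef γ μ R i j) *
        (1 + 2 * γ * ((aVec μ R' i ⬝ᵥ aVec μ R' j) - (aVec μ R i ⬝ᵥ aVec μ R j)))
      = (∑ i, ∑ j, wCoef γ μ i j * kCoef γ μ R i j)
        + 2 * γ * (∑ i, ∑ j, (wCoef γ μ i j * kCoef γ μ R i j) *
            ((aVec μ R' i - aVec μ R i) ⬝ᵥ aVec μ R j))
        + 2 * γ * (∑ i, ∑ j, (wCoef γ μ i j * kCoef γ μ R i j) *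
            (aVec μ R i ⬝ᵥ (aVec μ R' j - aVec μ R j)))
        + 2 * γ * (∑ i, ∑ j, (wCoef γ μ i j * kCoef γ μ R i j) *
            ((aVec μ R' i - aVec μ R i) ⬝ᵥ (aVec μ R' j - aVec μ R j))) := by
    simp_rw [hdot, Finset.sum_add_distrib, ← Finset.mul_sum]
  -- final assembly
  set S1 := ∑ i, ∑ j, (wCoef γ μ i j * kCoef γ μ R i j) *
      ((aVec μ R' i - aVec μ R i) ⬝ᵥ aVec μ R j) with hS1def
  set S2 := ∑ i, ∑ j, (wCoef γ μ i j * kCoef γ μ R i j) *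
      (aVec μ R i ⬝ᵥ (aVec μ R' j - aVec μ R j)) with hS2def
  set S3 := ∑ i, ∑ j, (wCoef γ μ i j * kCoef γ μ R i j) *
      ((aVec μ R' i - aVec μ R i) ⬝ᵥ (aVec μ R' j - aVec μ R j)) with hS3def
  set F := ∑ i, frobSq (R' i - R i) with hFdef
  have hS1 : η / 2 * F ≤ S1 := by
    rw [hFdef, Finset.mul_sum, hS1def]
    exact Finset.sum_le_sum fun i _ => hT1 i
  have hS2 : S2 = S1 := hsymsum
  have hsum : η * F ≤ S1 + S2 + S3 := by
    have h : η * F = 2 * (η / 2 * F) := by ring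
    linarith
  have hchain : (∑ i, ∑ j, wCoef γ μ i j * kCoef γ μ R i j) + 2 * γ * (S1 + S2 + S3)
      ≤ ∑ i, ∑ j, wCoef γ μ i j * kCoef γ μ R' i j := by
    rw [show (∑ i, ∑ j, wCoef γ μ i j * kCoef γ μ R i j) + 2 * γ * (S1 + S2 + S3)
        = (∑ i, ∑ j, wCoef γ μ i j * kCoef γ μ R i j) + 2 * γ * S1 + 2 * γ * S2 + 2 * γ * S3
        from by ring, ← hexpand]
    refine Finset.sum_le_sum fun i _ => Finset.sum_le_sum fun j _ => ?_
    rw [kCoef_eq γ μ R, kCoef_eq γ μ R']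
    exact expStep (Real.exp_pos _).le
  have hmul : 2 * γ * (η * F) ≤ 2 * γ * (S1 + S2 + S3) :=
    mul_le_mul_of_nonneg_left hsum (by linarith)
  calc (∑ i, ∑ j, wCoef γ μ i j * kCoef γ μ R i j) + 2 * γ * η * F
      = (∑ i, ∑ j, wCoef γ μ i j * kCoef γ μ R i j) + 2 * γ * (η * F) := by ring
    _ ≤ (∑ i, ∑ j, wCoef γ μ i j * kCoef γ μ R i j) + 2 * γ * (S1 + S2 + S3) := by linarith
    _ ≤ ∑ i, ∑ j, wCoef γ μ i j * kCoef γ μ R' i j := hchain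

end Ascent

lemma obj_le {M d : ℕ} (γ : ℝ) (hγ : 0 < γ) (μ : Fin M → (Fin d → ℝ))
    (R : Fin M → Matrix (Fin d) (Fin d) ℝ) (hR : ∀ i, (R i)ᵀ * R i = 1) :
    ∑ i, ∑ j, wCoef γ μ i j * kCoef γ μ R i j ≤ (M : ℝ) ^ 2 := by
  have hterm : ∀ i j : Fin M, wCoef γ μ i j * kCoef γ μ R i j ≤ 1 := by
    intro i j
    rw [wCoef, kCoef, ← Real.exp_add, Real.exp_le_one_iff]
    have h := dot_le ((R i).mulVec (μ i)) ((R j).mulVec (μ j))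
    rw [sqnorm_mulVec (hR i), sqnorm_mulVec (hR j)] at h
    nlinarith [mul_le_mul_of_nonneg_left h hγ.le]
  calc ∑ i, ∑ j, wCoef γ μ i j * kCoef γ μ R i j
      ≤ ∑ _i : Fin M, ∑ _j : Fin M, (1 : ℝ) :=
        Finset.sum_le_sum fun i _ => Finset.sum_le_sum fun j _ => hterm i j
    _ = (M : ℝ) ^ 2 := by simp [sq]

theorem algorithm1_increments_summable (M d : ℕ) (γ η : ℝ) (hγ : 0 < γ) (hη : 0 < η)
    (μ : Fin M → (Fin d → ℝ))
    (Rseq : ℕ → Fin M → Matrix (Fin d) (Fin d) ℝ)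
    (hR0 : ∀ i, (Rseq 0 i)ᵀ * Rseq 0 i = 1)
    (hstep : ∀ t : ℕ, ∀ i, ∃ (U V : Matrix (Fin d) (Fin d) ℝ) (s : Fin d → ℝ),
      Uᵀ * U = 1 ∧ Vᵀ * V = 1 ∧ (∀ k, 0 ≤ s k) ∧
      Hmat γ η μ (Rseq t) i = U * Matrix.diagonal s * Vᵀ ∧
      Rseq (t + 1) i = U * Vᵀ) :
    Summable (fun t : ℕ => ∑ i, frobSq (Rseq (t + 1) i - Rseq t i)) ∧
      ∀ i, Tendsto (fun t : ℕ => Rseq (t + 1) i - Rseq t i) atTop (nhds 0) := by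
  -- every iterate is orthogonal
  have horth : ∀ t i, (Rseq t i)ᵀ * Rseq t i = 1 := by
    intro t
    induction t with
    | zero => exact hR0
    | succ t ih =>
      intro i
      obtain ⟨U, V, s, hU, hV, hs, hH, hUV⟩ := hstep t i
      have hV' : V * Vᵀ = 1 := mul_eq_one_comm.mp hV
      rw [hUV, Matrix.transpose_mul, Matrix.transpose_transpose]
      calc V * Uᵀ * (U * Vᵀ) = V * ((Uᵀ * U) * Vᵀ) := by simp [Matrix.mul_assoc]
        _ = 1 := by rw [hU, Matrix.one_mul, hV']
  set L : ℕ → ℝ := fun t => ∑ i, ∑ j, wCoef γ μ i j * kCoef γ μ (Rseq t) i j with hL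
  set g : ℕ → ℝ := fun t => ∑ i, frobSq (Rseq (t + 1) i - Rseq t i) with hg
  have hg0 : ∀ t, 0 ≤ g t := fun t => Finset.sum_nonneg fun i _ => frobSq_nonneg _
  have hasc : ∀ t, L t + 2 * γ * η * g t ≤ L (t + 1) := fun t =>
    ascent γ η hγ hη μ (Rseq t) (Rseq (t + 1)) (horth t) (horth (t + 1)) (hstep t)
  have hLle : ∀ t, L t ≤ (M : ℝ) ^ 2 := fun t => obj_le γ hγ μ (Rseq t) (horth t)
  have hpartial : ∀ n, L 0 + 2 * γ * η * (∑ t ∈ Finset.range n, g t) ≤ L n := by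
    intro n
    induction n with
    | zero => simp
    | succ n ih =>
      rw [Finset.sum_range_succ]
      have := hasc n
      nlinarith
  have hpos : (0 : ℝ) < 2 * γ * η := by positivity
  have hsummable : Summable g := by
    refine summable_of_sum_range_le (c := ((M : ℝ) ^ 2 - L 0) / (2 * γ * η)) hg0 fun n => ?_
    rw [le_div_iff₀ hpos]
    nlinarith [hpartial n, hLle n]
  refine ⟨hsummable, fun i => ?_⟩
  have hgto : Tendsto g atTop (nhds 0) := hsummable.tendsto_atTop_zero
  have hfrob : Tendsto (fun t => frobSq (Rseq (t + 1) i - Rseq t i)) atTop (nhds 0) := by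
    refine squeeze_zero (fun t => frobSq_nonneg _) (fun t => ?_) hgto
    simp only [hg]
    exact Finset.single_le_sum (f := fun j => frobSq (Rseq (t + 1) j - Rseq t j))
      (fun j _ => frobSq_nonneg _) (Finset.mem_univ i)
  refine tendsto_pi_nhds.mpr fun a => tendsto_pi_nhds.mpr fun b => ?_
  have hzero : (0 : Matrix (Fin d) (Fin d) ℝ) a b = 0 := rfl
  rw [hzero]
  have hsq : Tendsto (fun t => ((Rseq (t + 1) i - Rseq t i) a b) ^ 2) atTop (nhds 0) := by
    refine squeeze_zero (fun t => sq_nonneg _) (fun t => ?_) hfrob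
    calc ((Rseq (t + 1) i - Rseq t i) a b) ^ 2
        ≤ ∑ b', ((Rseq (t + 1) i - Rseq t i) a b') ^ 2 :=
          Finset.single_le_sum (f := fun b' => ((Rseq (t + 1) i - Rseq t i) a b') ^ 2)
            (fun b' _ => sq_nonneg _) (Finset.mem_univ b)
      _ ≤ frobSq (Rseq (t + 1) i - Rseq t i) :=
          Finset.single_le_sum (f := fun a' => ∑ b', ((Rseq (t + 1) i - Rseq t i) a' b') ^ 2)
            (fun a' _ => Finset.sum_nonneg fun b' _ => sq_nonneg _) (Finset.mem_univ a)
  have habs : Tendsto (fun t => |(Rseq (t + 1) i - Rseq t i) a b|) atTop (nhds 0) := by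
    have := (Real.continuous_sqrt.tendsto 0).comp hsq
    simpa [Function.comp_def, Real.sqrt_sq_eq_abs] using this
  simp only [Matrix.sub_apply] at habs ⊢
  exact (tendsto_zero_iff_abs_tendsto_zero _).mpr habs
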